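/- Let Q be a solution to the (n,3)-queens problem (a non-attacking set of n² queens on the (n,3)-board), let 1 ≤ k < n, and suppose the corner subcube {n−k+1,…,n}³ contains exactly p queens of Q. Then the restriction Q ∩ {1,…,n−k}³ is a non-attacking set of exactly n² − 3kn + 3k² − p queens on the (n−k,3)-board. In particular, a partial solution of that size exists on the (n−k,3)-board. -/
import Mathlib


/-- A point `q` lies on the `(n,d)`-board, i.e. all coordinates are in `{1,…,n}`. -/
def onBoard (n d : ℕ) (q : Fin d → ℕ) : Prop :=
  ∀ i, 1 ≤ q i ∧ q i ≤ n

/-- Queen `a` attacks queen `b`: there are an integer `m` and a nonzero vector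
`ε ∈ {-1,0,1}^d` with `a i = ε i * m + b i` for all `i`. -/
def attacks {d : ℕ} (a b : Fin d → ℕ) : Prop :=
  ∃ (m : ℤ) (ε : Fin d → ℤ), (∀ i, ε i = -1 ∨ ε i = 0 ∨ ε i = 1) ∧ ε ≠ 0 ∧
    ∀ i, (a i : ℤ) = ε i * m + (b i : ℤ)

/-- A set of queens is non-attacking if no two distinct members attack each other. -/
def nonAttacking {d : ℕ} (Q : Finset (Fin d → ℕ)) : Prop :=
  ∀ a ∈ Q, ∀ b ∈ Q, a ≠ b → ¬ attacks a b

/-- A partial solution on the `(n,d)`-board: a non-attacking set fitting the board. -/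
def isPartial (n d : ℕ) (Q : Finset (Fin d → ℕ)) : Prop :=
  (∀ q ∈ Q, onBoard n d q) ∧ nonAttacking Q

/-- A solution to the `(n,d)`-queens problem: a non-attacking set of `n^(d-1)` queens. -/
def isSolution (n d : ℕ) (Q : Finset (Fin d → ℕ)) : Prop :=
  isPartial n d Q ∧ Q.card = n ^ (d - 1)

/-- The `(n,d)`-board as a finite set. -/
def boardFinset (n d : ℕ) : Finset (Fin d → ℕ) :=
  Fintype.piFinset fun _ => Finset.Icc 1 n

/-- `Qmax n d` : the maximum cardinality of a non-attacking set on the `(n,d)`-board. -/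
noncomputable def Qmax (n d : ℕ) : ℕ :=
  sSup {k | ∃ Q : Finset (Fin d → ℕ), isPartial n d Q ∧ Q.card = k}

/-- Subcube heuristic in 3D: if `Q` solves the `(n,3)`-queens problem, `1 ≤ k < n`,
and the corner subcube `{n-k+1,…,n}³` contains exactly `p` queens of `Q`, then
`Q ∩ {1,…,n-k}³` is a non-attacking set of exactly `n² - 3kn + 3k² - p` queens on the
`(n-k,3)`-board. -/
lemma le_iff_not_succ_le (a b : ℕ) : a ≤ b ↔ ¬ (b + 1 ≤ a) := by omega

lemma fin3_forall {P : Fin 3 → Prop} : (∀ i, P i) ↔ P 0 ∧ P 1 ∧ P 2 :=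
  ⟨fun h => ⟨h 0, h 1, h 2⟩, fun ⟨a, b, c⟩ i => by fin_cases i <;> assumption⟩

lemma fin3_third : ∀ t i j l : Fin 3, i ≠ j → l ≠ i → l ≠ j → t ≠ l → t = i ∨ t = j := by
  decide

/-- Two queens in a non-attacking set agreeing on two distinct coordinates are equal. -/
lemma agree_two {Q : Finset (Fin 3 → ℕ)} (hna : nonAttacking Q) {i j : Fin 3} (hij : i ≠ j)
    {a b : Fin 3 → ℕ} (ha : a ∈ Q) (hb : b ∈ Q) (hi : a i = b i) (hj : a j = b j) : a = b := by
  by_contra hne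
  apply hna a ha b hb hne
  obtain ⟨l, hl⟩ : ∃ l, a l ≠ b l := Function.ne_iff.mp hne
  have hli : l ≠ i := fun e => hl (by rw [e]; exact hi)
  have hlj : l ≠ j := fun e => hl (by rw [e]; exact hj)
  refine ⟨(a l : ℤ) - b l, fun t => if t = l then 1 else 0, ?_, ?_, ?_⟩
  · intro t; by_cases h : t = l <;> simp [h]
  · intro h
    have := congrFun h l
    simp at this
  · intro t
    by_cases h : t = l
    · subst h; simp
    · rcases fin3_third t i j l hij hli hlj h with rfl | rfl <;> simp [h, hi, hj]

lemma image_eq (n : ℕ) (Q : Finset (Fin 3 → ℕ)) (hb : ∀ q ∈ Q, onBoard n 3 q)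
    (hna : nonAttacking Q) (hcard : Q.card = n ^ 2) (i j : Fin 3) (hij : i ≠ j) :
    Q.image (fun q => (q i, q j)) = Finset.Icc 1 n ×ˢ Finset.Icc 1 n := by
  have hinj : Set.InjOn (fun q : Fin 3 → ℕ => (q i, q j)) ↑Q := by
    intro a ha b hb' h
    exact agree_two hna hij ha hb' (congrArg Prod.fst h) (congrArg Prod.snd h)
  apply Finset.eq_of_subset_of_card_le
  · intro x hx
    obtain ⟨q, hq, rfl⟩ := Finset.mem_image.mp hx
    simp only [Finset.mem_product, Finset.mem_Icc]
    exact ⟨⟨(hb q hq i).1, (hb q hq i).2⟩, ⟨(hb q hq j).1, (hb q hq j).2⟩⟩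
  · rw [Finset.card_image_of_injOn hinj, hcard, Finset.card_product, Nat.card_Icc]
    have h1 : n + 1 - 1 = n := rfl
    rw [h1, ← pow_two]

lemma count_eq (n : ℕ) (Q : Finset (Fin 3 → ℕ)) (hb : ∀ q ∈ Q, onBoard n 3 q)
    (hna : nonAttacking Q) (hcard : Q.card = n ^ 2) (i j : Fin 3) (hij : i ≠ j)
    (P : ℕ × ℕ → Prop) [DecidablePred P] :
    (Q.filter (fun q => P (q i, q j))).card =
      ((Finset.Icc 1 n ×ˢ Finset.Icc 1 n).filter P).card := by
  have hinj : Set.InjOn (fun q : Fin 3 → ℕ => (q i, q j)) ↑Q := by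
    intro a ha b hb' h
    exact agree_two hna hij ha hb' (congrArg Prod.fst h) (congrArg Prod.snd h)
  rw [← image_eq n Q hb hna hcard i j hij, Finset.filter_image,
    Finset.card_image_of_injOn (hinj.mono (Finset.filter_subset _ _))]

lemma prod_filter_card (n a : ℕ) (han : a ≤ n) :
    ((Finset.Icc 1 n ×ˢ Finset.Icc 1 n).filter (fun x => a + 1 ≤ x.1)).card = (n - a) * n := by
  have : (Finset.Icc 1 n ×ˢ Finset.Icc 1 n).filter (fun x => a + 1 ≤ x.1)
      = Finset.Icc (a + 1) n ×ˢ Finset.Icc 1 n := by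
    ext ⟨u, v⟩
    simp only [Finset.mem_filter, Finset.mem_product, Finset.mem_Icc]
    omega
  rw [this, Finset.card_product, Nat.card_Icc, Nat.card_Icc]
  have h1 : n + 1 - (a + 1) = n - a := by omega
  have h2 : n + 1 - 1 = n := by omega
  rw [h1, h2]

lemma prod_filter_card2 (n a : ℕ) (han : a ≤ n) :
    ((Finset.Icc 1 n ×ˢ Finset.Icc 1 n).filter
      (fun x => a + 1 ≤ x.1 ∧ a + 1 ≤ x.2)).card = (n - a) * (n - a) := by
  have : (Finset.Icc 1 n ×ˢ Finset.Icc 1 n).filter (fun x => a + 1 ≤ x.1 ∧ a + 1 ≤ x.2)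
      = Finset.Icc (a + 1) n ×ˢ Finset.Icc (a + 1) n := by
    ext ⟨u, v⟩
    simp only [Finset.mem_filter, Finset.mem_product, Finset.mem_Icc]
    omega
  rw [this, Finset.card_product, Nat.card_Icc]
  have h1 : n + 1 - (a + 1) = n - a := by omega
  rw [h1]
theorem subcube_heuristic_3d (n k p : ℕ) (hk1 : 1 ≤ k) (hkn : k < n)
    (Q : Finset (Fin 3 → ℕ)) (hQ : isSolution n 3 Q)
    (hp : (Q.filter (fun q => ∀ i, n - k + 1 ≤ q i)).card = p) :
    isPartial (n - k) 3 (Q.filter (fun q => ∀ i, q i ≤ n - k)) ∧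
    ((Q.filter (fun q => ∀ i, q i ≤ n - k)).card : ℤ) =
      (n : ℤ) ^ 2 - 3 * k * n + 3 * k ^ 2 - p := by
  obtain ⟨⟨hboard, hna⟩, hcardQ⟩ := hQ
  have hcard : Q.card = n ^ 2 := by simpa using hcardQ
  obtain ⟨c, hc⟩ : ∃ c, n - k = c := ⟨n - k, rfl⟩
  rw [hc] at hp ⊢
  have hck : c ≤ n := by clear hp; omega
  have hnc : n - c = k := by clear hp; omega
  constructor
  · refine ⟨?_, ?_⟩
    · intro q hq i
      have hq' := Finset.mem_filter.mp hq
      exact ⟨(hboard q hq'.1 i).1, hq'.2 i⟩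
    · intro a ha b hb hne
      exact hna a (Finset.mem_of_mem_filter a ha) b (Finset.mem_of_mem_filter b hb) hne
  · have key : ∀ (P : (Fin 3 → ℕ) → Prop) (_ : DecidablePred P),
        ((Q.filter P).card : ℤ) = ∑ q ∈ Q, if P q then (1:ℤ) else 0 := by
      intro P _
      rw [Finset.card_filter]
      push_cast
      rfl
    have h0 : (Q.filter (fun q => c + 1 ≤ q 0)).card = k * n := by
      have := count_eq n Q hboard hna hcard 0 1 (by decide) (fun x => c + 1 ≤ x.1)
      rw [prod_filter_card n c hck, hnc] at this
      exact this
    have h1 : (Q.filter (fun q => c + 1 ≤ q 1)).card = k * n := by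
      have := count_eq n Q hboard hna hcard 1 2 (by decide) (fun x => c + 1 ≤ x.1)
      rw [prod_filter_card n c hck, hnc] at this
      exact this
    have h2 : (Q.filter (fun q => c + 1 ≤ q 2)).card = k * n := by
      have := count_eq n Q hboard hna hcard 2 0 (by decide) (fun x => c + 1 ≤ x.1)
      rw [prod_filter_card n c hck, hnc] at this
      exact this
    have h01 : (Q.filter (fun q => c + 1 ≤ q 0 ∧ c + 1 ≤ q 1)).card = k * k := by
      have := count_eq n Q hboard hna hcard 0 1 (by decide)
        (fun x => c + 1 ≤ x.1 ∧ c + 1 ≤ x.2)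
      rw [prod_filter_card2 n c hck, hnc] at this
      exact this
    have h02 : (Q.filter (fun q => c + 1 ≤ q 0 ∧ c + 1 ≤ q 2)).card = k * k := by
      have := count_eq n Q hboard hna hcard 0 2 (by decide)
        (fun x => c + 1 ≤ x.1 ∧ c + 1 ≤ x.2)
      rw [prod_filter_card2 n c hck, hnc] at this
      exact this
    have h12 : (Q.filter (fun q => c + 1 ≤ q 1 ∧ c + 1 ≤ q 2)).card = k * k := by
      have := count_eq n Q hboard hna hcard 1 2 (by decide)
        (fun x => c + 1 ≤ x.1 ∧ c + 1 ≤ x.2)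
      rw [prod_filter_card2 n c hck, hnc] at this
      exact this
    have h012 : (Q.filter (fun q => c + 1 ≤ q 0 ∧ c + 1 ≤ q 1 ∧ c + 1 ≤ q 2)).card = p := by
      rw [← hp]
      congr 1
      ext q
      simp only [Finset.mem_filter, fin3_forall]
    have expand : ∀ q ∈ Q, (if (∀ i, q i ≤ c) then (1:ℤ) else 0) =
        1 - (if c+1 ≤ q 0 then (1:ℤ) else 0) - (if c+1 ≤ q 1 then (1:ℤ) else 0)
          - (if c+1 ≤ q 2 then (1:ℤ) else 0)
        + (if c+1 ≤ q 0 ∧ c+1 ≤ q 1 then (1:ℤ) else 0)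
        + (if c+1 ≤ q 0 ∧ c+1 ≤ q 2 then (1:ℤ) else 0)
        + (if c+1 ≤ q 1 ∧ c+1 ≤ q 2 then (1:ℤ) else 0)
        - (if c+1 ≤ q 0 ∧ c+1 ≤ q 1 ∧ c+1 ≤ q 2 then (1:ℤ) else 0) := by
      intro q _
      simp only [fin3_forall, le_iff_not_succ_le (q 0) c, le_iff_not_succ_le (q 1) c,
        le_iff_not_succ_le (q 2) c]
      by_cases A : c+1 ≤ q 0 <;> by_cases B : c+1 ≤ q 1 <;> by_cases C : c+1 ≤ q 2 <;>
        simp [A, B, C]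
    rw [key _ inferInstance, Finset.sum_congr rfl expand]
    simp only [Finset.sum_sub_distrib, Finset.sum_add_distrib, Finset.sum_const,
      nsmul_eq_mul, mul_one]
    rw [← key _ inferInstance, ← key _ inferInstance, ← key _ inferInstance,
      ← key _ inferInstance, ← key _ inferInstance, ← key _ inferInstance,
      ← key _ inferInstance, h0, h1, h2, h01, h02, h12, h012, hcard]
    push_cast
    ring
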